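/- Let θ ∈ (0,1) and let H be an n-vertex 3-graph that is strongly (1/3, θ)-dense. Then H has at most two tight components. -/

import Mathlib

open Finset

variable {V : Type*} [DecidableEq V] [Fintype V]

/-- A tight path in a 3-graph `H`: a list of distinct vertices in which every 3
consecutive vertices form an edge of `H`. -/
def IsTightPath (H : Finset (Finset V)) (l : List V) : Prop :=
  l.Nodup ∧ ∀ (i : ℕ) (h : i + 2 < l.length),
    ({l[i]'(by omega), l[i + 1]'(by omega), l[i + 2]'(by omega)} : Finset V) ∈ H

/-- The codegree of a pair of vertices. -/
def codeg (H : Finset (Finset V)) (u v : V) : ℕ :=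
  (H.filter fun e => u ∈ e ∧ v ∈ e).card

/-- The first end of a tight path `v₁ v₂ ⋯ v_p`, i.e. the ordered pair `(v₂, v₁)`. -/
def firstEnd (l : List V) : Option (V × V) :=
  match l with
  | a :: b :: _ => some (b, a)
  | _ => none

/-- The last end of a tight path `v₁ v₂ ⋯ v_p`, i.e. the ordered pair `(v_{p-1}, v_p)`. -/
def lastEnd (l : List V) : Option (V × V) :=
  firstEnd l.reverse

/-- The set of vertices covered by a family of paths. -/
def famVerts (Ps : List (List V)) : Finset V :=
  Ps.foldr (fun P s => P.toFinset ∪ s) ∅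

/-- A family of pairwise vertex-disjoint tight paths. -/
def PathFamily (H : Finset (Finset V)) (Ps : List (List V)) : Prop :=
  (∀ P ∈ Ps, IsTightPath H P) ∧
  Ps.Pairwise fun P Q => Disjoint P.toFinset Q.toFinset

/-- Two families of paths have the same length and corresponding members have the same ends. -/
def SameEndsList (Ps Qs : List (List V)) : Prop :=
  Ps.length = Qs.length ∧ ∀ j < Ps.length,
    firstEnd (Ps.getD j []) = firstEnd (Qs.getD j []) ∧
    lastEnd (Ps.getD j []) = lastEnd (Qs.getD j [])

/-- `u` and `v` are `(β, i)`-reachable in `H`. -/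
def Reachable (H : Finset (Finset V)) (β : ℝ) (i : ℕ) (u v : V) : Prop :=
  β * (Fintype.card V : ℝ) ^ (5 * i - 1) ≤
    (({T : Finset V | T.card = 5 * i - 1 ∧
      ∃ Ps Qs : List (List V), Ps.length = i ∧
        (∀ P ∈ Ps, IsTightPath H P ∧ P.length = 5) ∧
        (∀ Q ∈ Qs, IsTightPath H Q ∧ Q.length = 5) ∧
        Ps.Pairwise (fun P P' => Disjoint P.toFinset P'.toFinset) ∧
        Qs.Pairwise (fun Q Q' => Disjoint Q.toFinset Q'.toFinset) ∧
        famVerts Ps = insert u T ∧ famVerts Qs = insert v T ∧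
        SameEndsList Ps Qs} : Set (Finset V)).ncard : ℝ)

/-- The set `Ñ_{β,i}(v)` of vertices `(β,i)`-reachable to `v`. -/
def reachSet (H : Finset (Finset V)) (β : ℝ) (i : ℕ) (v : V) : Set V :=
  {u | u ≠ v ∧ Reachable H β i u v}

/-- A vertex set is `(β, i)`-closed in `H`. -/
def IsClosedSet (H : Finset (Finset V)) (β : ℝ) (i : ℕ) (U : Finset V) : Prop :=
  ∀ u ∈ U, ∀ v ∈ U, u ≠ v → Reachable H β i u v

/-- `Ps` is an `S`-absorber in `H`. -/
def IsAbsorber (H : Finset (Finset V)) (S : Finset V) (Ps : List (List V)) : Prop :=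
  PathFamily H Ps ∧ Disjoint (famVerts Ps) S ∧
  ∃ Qs : List (List V), PathFamily H Qs ∧ famVerts Qs = famVerts Ps ∪ S ∧
    SameEndsList Ps Qs

/-- Two edges of `H` sharing exactly two vertices. -/
def EdgeAdj (H : Finset (Finset V)) (e f : Finset V) : Prop :=
  e ∈ H ∧ f ∈ H ∧ (e ∩ f).card = 2

/-- Two edges lie in the same tight component: they are joined by a pseudo-path. -/
def SameTightComponent (H : Finset (Finset V)) (e f : Finset V) : Prop :=
  e ∈ H ∧ f ∈ H ∧ Relation.ReflTransGen (EdgeAdj H) e f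

/-- `H` has at most two tight components: among any three edges two lie in a common
tight component. -/
def AtMostTwoTightComponents (H : Finset (Finset V)) : Prop :=
  ∀ e ∈ H, ∀ f ∈ H, ∀ g ∈ H,
    SameTightComponent H e f ∨ SameTightComponent H e g ∨ SameTightComponent H f g

/-- The number of edges of `H` containing the set `p`. -/
def degPair (H : Finset (Finset V)) (p : Finset V) : ℕ :=
  (H.filter fun e => p ⊆ e).card

/-- `H` is `(μ, θ)`-dense: all but at most `θ * C(n,2)` pairs have codegree at least `μ n`. -/
def Dense3 (H : Finset (Finset V)) (μ θ : ℝ) : Prop :=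
  (({p : Finset V | p.card = 2 ∧ (degPair H p : ℝ) < μ * Fintype.card V} :
      Set (Finset V)).ncard : ℝ) ≤ θ * ((Fintype.card V).choose 2)

/-- `H` is strongly `(μ, θ)`-dense. -/
def StronglyDense3 (H : Finset (Finset V)) (μ θ : ℝ) : Prop :=
  Dense3 H μ θ ∧ ∀ p : Finset V, p.card = 2 →
    degPair H p = 0 ∨ μ * Fintype.card V ≤ (degPair H p : ℝ)

/-- A tight Hamilton cycle: a cyclic ordering of all vertices in which every 3
cyclically consecutive vertices form an edge. -/
def IsTightHamCycle (H : Finset (Finset V)) (l : List V) : Prop :=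
  l.Nodup ∧ l.toFinset = Finset.univ ∧ 3 ≤ l.length ∧
  ∀ (i : ℕ) (h : i < l.length),
    ({l[i]'h, l[(i + 1) % l.length]'(Nat.mod_lt _ (by omega)),
      l[(i + 2) % l.length]'(Nat.mod_lt _ (by omega))} : Finset V) ∈ H

/-- `H ∗ K_t^{(3)}`: add `t` new vertices and all triples meeting them. -/
def starK (H : Finset (Finset V)) (t : ℕ) : Finset (Finset (V ⊕ Fin t)) :=
  (Finset.univ : Finset (Finset (V ⊕ Fin t))).filter fun e =>
    e.card = 3 ∧ ((∃ x ∈ e, x.isRight = true) ∨ ∃ f ∈ H, e = f.image Sum.inl)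

/-- The link of a vertex: the set of pairs forming an edge together with it. -/
def linkPairs (H : Finset (Finset V)) (u : V) : Set (Finset V) :=
  {p | p.card = 2 ∧ u ∉ p ∧ insert u p ∈ H}

section Aux

variable {n : ℕ} {H : Finset (Finset (Fin n))}

lemma stc_refl {e : Finset (Fin n)} (he : e ∈ H) : SameTightComponent H e e :=
  ⟨he, he, Relation.ReflTransGen.refl⟩

lemma stc_symm {e f : Finset (Fin n)} (h : SameTightComponent H e f) :
    SameTightComponent H f e := by
  obtain ⟨he, hf, hr⟩ := h
  refine ⟨hf, he, Std.Symm.symm (self := @Relation.ReflTransGen.stdSymm _ (EdgeAdj H) ⟨?_⟩) _ _ hr⟩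
  rintro a b ⟨ha, hb, hc⟩
  exact ⟨hb, ha, by rwa [Finset.inter_comm]⟩

lemma stc_trans {e f g : Finset (Fin n)} (h1 : SameTightComponent H e f)
    (h2 : SameTightComponent H f g) : SameTightComponent H e g :=
  ⟨h1.1, h2.2.1, h1.2.2.trans h2.2.2⟩

lemma pair_subset {a b : Fin n} {s : Finset (Fin n)} (ha : a ∈ s) (hb : b ∈ s) :
    ({a, b} : Finset (Fin n)) ⊆ s :=
  Finset.insert_subset ha (Finset.singleton_subset_iff.mpr hb)

lemma samePair (h3 : ∀ e ∈ H, e.card = 3) {e f p : Finset (Fin n)}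
    (he : e ∈ H) (hf : f ∈ H) (hp : p.card = 2) (hpe : p ⊆ e) (hpf : p ⊆ f) :
    SameTightComponent H e f := by
  refine ⟨he, hf, ?_⟩
  rcases eq_or_ne e f with rfl | hne
  · exact Relation.ReflTransGen.refl
  · refine Relation.ReflTransGen.single ⟨he, hf, ?_⟩
    have h1 : p ⊆ e ∩ f := subset_inter hpe hpf
    have h2 : 2 ≤ (e ∩ f).card := hp ▸ card_le_card h1
    have h4 : (e ∩ f).card ≤ 3 := (h3 e he) ▸ card_le_card inter_subset_left
    by_contra hcard
    have h5 : (e ∩ f).card = 3 := by omega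
    have he' : e ∩ f = e :=
      eq_of_subset_of_card_le inter_subset_left (by rw [h3 e he, h5])
    have hf' : e ∩ f = f :=
      eq_of_subset_of_card_le inter_subset_right (by rw [h3 f hf, h5])
    exact hne (he' ▸ hf')

lemma noSharedPair (h3 : ∀ e ∈ H, e.card = 3) {e1 e2 f1 f2 p : Finset (Fin n)}
    (h12 : ¬ SameTightComponent H e1 e2)
    (hc1 : SameTightComponent H e1 f1) (hc2 : SameTightComponent H e2 f2)
    (hp : p.card = 2) (hpf1 : p ⊆ f1) (hpf2 : p ⊆ f2) : False :=
  h12 (stc_trans (stc_trans hc1 (samePair h3 hc1.2.1 hc2.2.1 hp hpf1 hpf2)) (stc_symm hc2))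

/-- The set of third vertices of edges containing the pair `p`. -/
def NB (H : Finset (Finset (Fin n))) (p : Finset (Fin n)) : Finset (Fin n) :=
  univ.filter fun z => z ∉ p ∧ insert z p ∈ H

open Classical in
/-- The shadow neighbourhood of `u` in the tight component of `e`. -/
noncomputable def DN (H : Finset (Finset (Fin n))) (e : Finset (Fin n)) (u : Fin n) :
    Finset (Fin n) :=
  univ.filter fun w => w ≠ u ∧ ∃ h ∈ H, SameTightComponent H e h ∧ u ∈ h ∧ w ∈ h

open Classical in
/-- The support of the tight component of `e`. -/
noncomputable def SP (H : Finset (Finset (Fin n))) (e : Finset (Fin n)) : Finset (Fin n) :=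
  univ.filter fun v => ∃ h ∈ H, SameTightComponent H e h ∧ v ∈ h

lemma mem_NB {p : Finset (Fin n)} {z : Fin n} :
    z ∈ NB H p ↔ z ∉ p ∧ insert z p ∈ H := by simp [NB]

lemma mem_DN {e : Finset (Fin n)} {u w : Fin n} :
    w ∈ DN H e u ↔ w ≠ u ∧ ∃ h ∈ H, SameTightComponent H e h ∧ u ∈ h ∧ w ∈ h := by
  simp [DN]

lemma mem_SP {e : Finset (Fin n)} {v : Fin n} :
    v ∈ SP H e ↔ ∃ h ∈ H, SameTightComponent H e h ∧ v ∈ h := by simp [SP]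

lemma NB_card (h3 : ∀ e ∈ H, e.card = 3)
    (hd : ∀ p : Finset (Fin n), p.card = 2 →
      degPair H p = 0 ∨ 1 / 3 * (Fintype.card (Fin n) : ℝ) ≤ (degPair H p : ℝ))
    {p e : Finset (Fin n)} (hp : p.card = 2) (he : e ∈ H) (hpe : p ⊆ e) :
    n ≤ 3 * (NB H p).card := by
  have hdp : 1 ≤ degPair H p := by
    have hmem : e ∈ H.filter fun f => p ⊆ f := mem_filter.mpr ⟨he, hpe⟩
    exact card_pos.mpr ⟨e, hmem⟩
  have hge : n ≤ 3 * degPair H p := by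
    rcases hd p hp with h0 | h0
    · omega
    · rw [Fintype.card_fin] at h0
      have : (n : ℝ) ≤ 3 * (degPair H p : ℝ) := by linarith
      exact_mod_cast this
  have hsub : H.filter (fun f => p ⊆ f) ⊆ (NB H p).image fun z => insert z p := by
    intro f hf
    obtain ⟨hfH, hpf⟩ := mem_filter.mp hf
    have hc : (f \ p).card = 1 := by rw [card_sdiff_of_subset hpf, h3 f hfH, hp]
    obtain ⟨z, hz⟩ := card_eq_one.mp hc
    have hzf : z ∈ f \ p := hz ▸ mem_singleton_self z
    have hznp : z ∉ p := (mem_sdiff.mp hzf).2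
    have hfeq : f = insert z p := by
      have h := union_sdiff_of_subset hpf
      rw [hz] at h
      rw [← h, insert_eq, union_comm]
    exact mem_image.mpr ⟨z, mem_NB.mpr ⟨hznp, hfeq ▸ hfH⟩, hfeq.symm⟩
  have hle : degPair H p ≤ (NB H p).card :=
    le_trans (card_le_card hsub) card_image_le
  omega

lemma DN_card (h3 : ∀ e ∈ H, e.card = 3)
    (hd : ∀ p : Finset (Fin n), p.card = 2 →
      degPair H p = 0 ∨ 1 / 3 * (Fintype.card (Fin n) : ℝ) ≤ (degPair H p : ℝ))
    {e : Finset (Fin n)} {u : Fin n}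
    (hh : ∃ h ∈ H, SameTightComponent H e h ∧ u ∈ h) :
    n ≤ 3 * (DN H e u).card := by
  obtain ⟨h, hhH, hcomp, hu⟩ := hh
  have hcard := h3 h hhH
  have hne : (h.erase u).Nonempty := by
    rw [← card_pos, card_erase_of_mem hu, hcard]; omega
  obtain ⟨a, ha⟩ := hne
  have hau : a ≠ u := ne_of_mem_erase ha
  have hah : a ∈ h := mem_of_mem_erase ha
  have hpc : ({u, a} : Finset (Fin n)).card = 2 := card_pair (Ne.symm hau)
  have hsub : ({u, a} : Finset (Fin n)) ⊆ h := pair_subset hu hah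
  have h1 : n ≤ 3 * (NB H {u, a}).card := NB_card h3 hd hpc hhH hsub
  have h2 : NB H {u, a} ⊆ DN H e u := by
    intro z hz
    obtain ⟨hznp, hzH⟩ := mem_NB.mp hz
    have hzu : z ≠ u := fun hzu => hznp (by simp [hzu])
    refine mem_DN.mpr ⟨hzu, insert z {u, a}, hzH, ?_, by simp, by simp⟩
    exact stc_trans hcomp (samePair h3 hhH hzH hpc hsub (subset_insert _ _))
  have := card_le_card h2
  omega

lemma SP_card (h3 : ∀ e ∈ H, e.card = 3)
    (hd : ∀ p : Finset (Fin n), p.card = 2 →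
      degPair H p = 0 ∨ 1 / 3 * (Fintype.card (Fin n) : ℝ) ≤ (degPair H p : ℝ))
    {e : Finset (Fin n)} (he : e ∈ H) :
    n + 6 ≤ 3 * (SP H e).card := by
  have hcard := h3 e he
  have h1lt : 1 < e.card := by omega
  obtain ⟨a, haE, b, hbE, hab⟩ := one_lt_card.mp h1lt
  have hpc : ({a, b} : Finset (Fin n)).card = 2 := card_pair hab
  have hsub : ({a, b} : Finset (Fin n)) ⊆ e := pair_subset haE hbE
  have h1 : n ≤ 3 * (NB H {a, b}).card := NB_card h3 hd hpc he hsub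
  have h2 : insert a (insert b (NB H {a, b})) ⊆ SP H e := by
    intro v hv
    rcases mem_insert.mp hv with rfl | hv
    · exact mem_SP.mpr ⟨e, he, stc_refl he, haE⟩
    rcases mem_insert.mp hv with rfl | hv
    · exact mem_SP.mpr ⟨e, he, stc_refl he, hbE⟩
    · obtain ⟨hvnp, hvH⟩ := mem_NB.mp hv
      exact mem_SP.mpr ⟨insert v {a, b}, hvH,
        stc_symm (samePair h3 hvH he hpc (subset_insert _ _) hsub), mem_insert_self _ _⟩
  have hbnb : b ∉ NB H {a, b} := fun hb => (mem_NB.mp hb).1 (by simp)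
  have hanb : a ∉ insert b (NB H {a, b}) := by
    simp only [mem_insert]
    push_neg
    exact ⟨hab, fun ha => (mem_NB.mp ha).1 (by simp)⟩
  have h4 : (insert a (insert b (NB H {a, b}))).card = (NB H {a, b}).card + 2 := by
    rw [card_insert_of_notMem hanb, card_insert_of_notMem hbnb]
  have := card_le_card h2
  omega

lemma card4sum {A B C D : Finset (Fin n)} (hAB : Disjoint A B) (hAC : Disjoint A C)
    (hBC : Disjoint B C) (hAD : Disjoint A D) (hBD : Disjoint B D) (hCD : Disjoint C D) :
    A.card + B.card + C.card + D.card ≤ n := by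
  have hDd : Disjoint (A ∪ B ∪ C) D := by
    rw [disjoint_union_left, disjoint_union_left]
    exact ⟨⟨hAD, hBD⟩, hCD⟩
  have hCd : Disjoint (A ∪ B) C := by
    rw [disjoint_union_left]; exact ⟨hAC, hBC⟩
  have h := card_le_univ (A ∪ B ∪ C ∪ D)
  rw [card_union_of_disjoint hDd, card_union_of_disjoint hCd, card_union_of_disjoint hAB,
    Fintype.card_fin] at h
  exact h

lemma disjoint_pairset {s : Finset (Fin n)} {a b : Fin n} (ha : a ∉ s) (hb : b ∉ s) :
    Disjoint s ({a, b} : Finset (Fin n)) := by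
  rw [disjoint_right]
  intro y hy
  rcases mem_insert.mp hy with rfl | hy
  · exact ha
  · rw [mem_singleton.mp hy]; exact hb

lemma disjoint_tripleset {s : Finset (Fin n)} {a b c : Fin n}
    (ha : a ∉ s) (hb : b ∉ s) (hc : c ∉ s) :
    Disjoint s ({a, b, c} : Finset (Fin n)) := by
  rw [disjoint_right]
  intro y hy
  rcases mem_insert.mp hy with rfl | hy
  · exact ha
  rcases mem_insert.mp hy with rfl | hy
  · exact hb
  · rw [mem_singleton.mp hy]; exact hc

lemma stepCD (h3 : ∀ e ∈ H, e.card = 3)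
    (hd : ∀ p : Finset (Fin n), p.card = 2 →
      degPair H p = 0 ∨ 1 / 3 * (Fintype.card (Fin n) : ℝ) ≤ (degPair H p : ℝ))
    {e1 e2 e3 : Finset (Fin n)}
    (h12 : ¬ SameTightComponent H e1 e2) (h13 : ¬ SameTightComponent H e1 e3)
    (h23 : ¬ SameTightComponent H e2 e3)
    {u x : Fin n} (hxu : x ≠ u)
    (hC1 : ∃ h ∈ H, SameTightComponent H e1 h ∧ u ∈ h ∧ x ∈ h)
    (hC2 : ∃ h ∈ H, SameTightComponent H e2 h ∧ u ∈ h)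
    (hC3 : ∃ h ∈ H, SameTightComponent H e3 h ∧ x ∈ h) : False := by
  obtain ⟨f1, hf1H, hf1c, huf1, hxf1⟩ := hC1
  have hp1 : ({u, x} : Finset (Fin n)).card = 2 := card_pair (Ne.symm hxu)
  have hp1f1 : ({u, x} : Finset (Fin n)) ⊆ f1 := pair_subset huf1 hxf1
  -- every edge containing the pair {u,x} lies in the component of e1
  have hE1 : ∀ f ∈ H, ({u, x} : Finset (Fin n)) ⊆ f → SameTightComponent H e1 f :=
    fun f hf hsub => stc_trans hf1c (samePair h3 hf1H hf hp1 hp1f1 hsub)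
  have hA : n ≤ 3 * (NB H {u, x}).card := NB_card h3 hd hp1 hf1H hp1f1
  have hDu : n ≤ 3 * (DN H e2 u).card := DN_card h3 hd hC2
  have hDx : n ≤ 3 * (DN H e3 x).card := DN_card h3 hd hC3
  -- A is disjoint from DN e2 u (pair {u,y}) and from DN e3 x (pair {x,y})
  have hAD2 : Disjoint (NB H {u, x}) (DN H e2 u) := by
    rw [disjoint_left]
    intro y hyA hyD
    obtain ⟨hynp, hyH⟩ := mem_NB.mp hyA
    obtain ⟨hyu, h', hH', hc', hu', hy'⟩ := mem_DN.mp hyD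
    exact noSharedPair h3 h12 (hE1 _ hyH (subset_insert _ _)) hc'
      (card_pair (Ne.symm hyu)) (pair_subset (by simp) (mem_insert_self _ _))
      (pair_subset hu' hy')
  have hAD3 : Disjoint (NB H {u, x}) (DN H e3 x) := by
    rw [disjoint_left]
    intro y hyA hyD
    obtain ⟨hynp, hyH⟩ := mem_NB.mp hyA
    obtain ⟨hyx, h', hH', hc', hx', hy'⟩ := mem_DN.mp hyD
    exact noSharedPair h3 h13 (hE1 _ hyH (subset_insert _ _)) hc'
      (card_pair (Ne.symm hyx)) (pair_subset (by simp) (mem_insert_self _ _))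
      (pair_subset hx' hy')
  have huA : u ∉ NB H {u, x} := fun h => (mem_NB.mp h).1 (by simp)
  have hxA : x ∉ NB H {u, x} := fun h => (mem_NB.mp h).1 (by simp)
  have huD2 : u ∉ DN H e2 u := fun h => (mem_DN.mp h).1 rfl
  have hxD3 : x ∉ DN H e3 x := fun h => (mem_DN.mp h).1 rfl
  have hxD2 : x ∉ DN H e2 u := by
    intro h
    obtain ⟨_, h', hH', hc', hu', hx'⟩ := mem_DN.mp h
    exact noSharedPair h3 h12 hf1c hc' hp1 hp1f1 (pair_subset hu' hx')
  have huD3 : u ∉ DN H e3 x := by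
    intro h
    obtain ⟨_, h', hH', hc', hx', hu'⟩ := mem_DN.mp h
    exact noSharedPair h3 h13 hf1c hc' hp1 hp1f1 (pair_subset hu' hx')
  rcases (DN H e2 u ∩ DN H e3 x).eq_empty_or_nonempty with hemp | ⟨z, hz⟩
  · -- then A, DN2, DN3, {u,x} pairwise disjoint: contradiction
    have hD23 : Disjoint (DN H e2 u) (DN H e3 x) := disjoint_iff_inter_eq_empty.mpr hemp
    have hcount := card4sum hAD2 hAD3 hD23 (disjoint_pairset huA hxA)
      (disjoint_pairset huD2 hxD2) (disjoint_pairset huD3 hxD3)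
    rw [hp1] at hcount
    omega
  · obtain ⟨hzD2, hzD3⟩ := mem_inter.mp hz
    obtain ⟨hzu, h2', h2H, hc2', hu2', hz2'⟩ := mem_DN.mp hzD2
    obtain ⟨hzx, h3', h3H, hc3', hx3', hz3'⟩ := mem_DN.mp hzD3
    have hp2 : ({u, z} : Finset (Fin n)).card = 2 := card_pair (Ne.symm hzu)
    have hp3 : ({x, z} : Finset (Fin n)).card = 2 := card_pair (Ne.symm hzx)
    have hp2h : ({u, z} : Finset (Fin n)) ⊆ h2' := pair_subset hu2' hz2'
    have hp3h : ({x, z} : Finset (Fin n)) ⊆ h3' := pair_subset hx3' hz3'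
    have hE2 : ∀ f ∈ H, ({u, z} : Finset (Fin n)) ⊆ f → SameTightComponent H e2 f :=
      fun f hf hsub => stc_trans hc2' (samePair h3 h2H hf hp2 hp2h hsub)
    have hE3 : ∀ f ∈ H, ({x, z} : Finset (Fin n)) ⊆ f → SameTightComponent H e3 f :=
      fun f hf hsub => stc_trans hc3' (samePair h3 h3H hf hp3 hp3h hsub)
    have hB : n ≤ 3 * (NB H {u, z}).card := NB_card h3 hd hp2 h2H hp2h
    have hC : n ≤ 3 * (NB H {x, z}).card := NB_card h3 hd hp3 h3H hp3h
    have hAB : Disjoint (NB H {u, x}) (NB H {u, z}) := by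
      rw [disjoint_left]
      intro y hyA hyB
      obtain ⟨hynA, hyHA⟩ := mem_NB.mp hyA
      obtain ⟨hynB, hyHB⟩ := mem_NB.mp hyB
      have hyu : y ≠ u := fun h => hynA (by simp [h])
      exact noSharedPair h3 h12 (hE1 _ hyHA (subset_insert _ _))
        (hE2 _ hyHB (subset_insert _ _)) (card_pair (Ne.symm hyu))
        (pair_subset (by simp) (mem_insert_self _ _))
        (pair_subset (by simp) (mem_insert_self _ _))
    have hAC : Disjoint (NB H {u, x}) (NB H {x, z}) := by
      rw [disjoint_left]
      intro y hyA hyC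
      obtain ⟨hynA, hyHA⟩ := mem_NB.mp hyA
      obtain ⟨hynC, hyHC⟩ := mem_NB.mp hyC
      have hyx : y ≠ x := fun h => hynA (by simp [h])
      exact noSharedPair h3 h13 (hE1 _ hyHA (subset_insert _ _))
        (hE3 _ hyHC (subset_insert _ _)) (card_pair (Ne.symm hyx))
        (pair_subset (by simp) (mem_insert_self _ _))
        (pair_subset (by simp) (mem_insert_self _ _))
    have hBC : Disjoint (NB H {u, z}) (NB H {x, z}) := by
      rw [disjoint_left]
      intro y hyB hyC
      obtain ⟨hynB, hyHB⟩ := mem_NB.mp hyB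
      obtain ⟨hynC, hyHC⟩ := mem_NB.mp hyC
      have hyz : y ≠ z := fun h => hynB (by simp [h])
      exact noSharedPair h3 h23 (hE2 _ hyHB (subset_insert _ _))
        (hE3 _ hyHC (subset_insert _ _)) (card_pair (Ne.symm hyz))
        (pair_subset (by simp) (mem_insert_self _ _))
        (pair_subset (by simp) (mem_insert_self _ _))
    -- z ∉ A, x ∉ B, u ∉ C
    have hzA : z ∉ NB H {u, x} := by
      intro h
      obtain ⟨hznp, hzH⟩ := mem_NB.mp h
      exact noSharedPair h3 h12 (hE1 _ hzH (subset_insert _ _)) hc2' hp2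
        (pair_subset (by simp) (mem_insert_self _ _)) hp2h
    have hxB : x ∉ NB H {u, z} := by
      intro h
      obtain ⟨hxnp, hxH⟩ := mem_NB.mp h
      exact noSharedPair h3 h12 (hE1 _ hxH (pair_subset (by simp) (by simp)))
        (hE2 _ hxH (subset_insert _ _)) hp1
        (pair_subset (by simp) (by simp)) (pair_subset (by simp) (by simp))
    have huC : u ∉ NB H {x, z} := by
      intro h
      obtain ⟨hunp, huH⟩ := mem_NB.mp h
      exact noSharedPair h3 h13 (hE1 _ huH (pair_subset (by simp) (by simp)))
        (hE3 _ huH (subset_insert _ _)) hp1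
        (pair_subset (by simp) (by simp)) (pair_subset (by simp) (by simp))
    have huB : u ∉ NB H {u, z} := fun h => (mem_NB.mp h).1 (by simp)
    have hzB : z ∉ NB H {u, z} := fun h => (mem_NB.mp h).1 (by simp)
    have hxC : x ∉ NB H {x, z} := fun h => (mem_NB.mp h).1 (by simp)
    have hzC : z ∉ NB H {x, z} := fun h => (mem_NB.mp h).1 (by simp)
    have hT : ({u, x, z} : Finset (Fin n)).card = 3 := by
      rw [card_insert_of_notMem (by simp [Ne.symm hxu, Ne.symm hzu]),
        card_insert_of_notMem (by simp [Ne.symm hzx]), card_singleton]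
    have hcount := card4sum hAB hAC hBC (disjoint_tripleset huA hxA hzA)
      (disjoint_tripleset huB hxB hzB) (disjoint_tripleset huC hxC hzC)
    rw [hT] at hcount
    omega

lemma stepB (h3 : ∀ e ∈ H, e.card = 3)
    (hd : ∀ p : Finset (Fin n), p.card = 2 →
      degPair H p = 0 ∨ 1 / 3 * (Fintype.card (Fin n) : ℝ) ≤ (degPair H p : ℝ))
    {e1 e2 e3 : Finset (Fin n)} (he3 : e3 ∈ H)
    (h12 : ¬ SameTightComponent H e1 e2) (h13 : ¬ SameTightComponent H e1 e3)
    (h23 : ¬ SameTightComponent H e2 e3)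
    {u : Fin n}
    (hu1 : ∃ h ∈ H, SameTightComponent H e1 h ∧ u ∈ h)
    (hu2 : ∃ h ∈ H, SameTightComponent H e2 h ∧ u ∈ h) : False := by
  have hD1 := DN_card h3 hd hu1
  have hD2 := DN_card h3 hd hu2
  have huD1 : u ∉ DN H e1 u := fun h => (mem_DN.mp h).1 rfl
  have huD2 : u ∉ DN H e2 u := fun h => (mem_DN.mp h).1 rfl
  have hdisj : ∀ {a b : Finset (Fin n)}, ¬ SameTightComponent H a b →
      Disjoint (DN H a u) (DN H b u) := by
    intro a b hab
    rw [disjoint_left]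
    intro w hw1 hw2
    obtain ⟨hwu, f, hfH, hfc, huf, hwf⟩ := mem_DN.mp hw1
    obtain ⟨_, g, hgH, hgc, hug, hwg⟩ := mem_DN.mp hw2
    exact noSharedPair h3 hab hfc hgc (card_pair (Ne.symm hwu))
      (pair_subset huf hwf) (pair_subset hug hwg)
  have hD12 : Disjoint (DN H e1 u) (DN H e2 u) := hdisj h12
  have hu3 : u ∉ SP H e3 := by
    intro hu3
    have hu3' := mem_SP.mp hu3
    have hD3 := DN_card h3 hd hu3'
    have huD3 : u ∉ DN H e3 u := fun h => (mem_DN.mp h).1 rfl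
    have hcount := card4sum hD12 (hdisj h13) (hdisj h23)
      (disjoint_singleton_right.mpr huD1) (disjoint_singleton_right.mpr huD2)
      (disjoint_singleton_right.mpr huD3)
    rw [card_singleton] at hcount
    omega
  have hSP := SP_card h3 hd he3
  rcases (SP H e3 ∩ (DN H e1 u ∪ DN H e2 u)).eq_empty_or_nonempty with hemp | ⟨x, hx⟩
  · have hdisj' : Disjoint (SP H e3) (DN H e1 u ∪ DN H e2 u) :=
      disjoint_iff_inter_eq_empty.mpr hemp
    rw [disjoint_union_right] at hdisj'
    have hcount := card4sum hdisj'.1 hdisj'.2 hD12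
      (disjoint_singleton_right.mpr hu3) (disjoint_singleton_right.mpr huD1)
      (disjoint_singleton_right.mpr huD2)
    rw [card_singleton] at hcount
    omega
  · obtain ⟨hxS, hxD⟩ := mem_inter.mp hx
    have hC3 := mem_SP.mp hxS
    rcases mem_union.mp hxD with hxD1 | hxD2
    · obtain ⟨hxu, f, hfH, hfc, huf, hxf⟩ := mem_DN.mp hxD1
      exact stepCD h3 hd h12 h13 h23 hxu ⟨f, hfH, hfc, huf, hxf⟩ hu2 hC3
    · obtain ⟨hxu, f, hfH, hfc, huf, hxf⟩ := mem_DN.mp hxD2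
      exact stepCD h3 hd (fun h => h12 (stc_symm h)) h23 h13 hxu
        ⟨f, hfH, hfc, huf, hxf⟩ hu1 hC3

end Aux

theorem statement6 (n : ℕ) (θ : ℝ) (hθ0 : 0 < θ) (hθ1 : θ < 1)
    (H : Finset (Finset (Fin n))) (h3 : ∀ e ∈ H, e.card = 3)
    (hdense : StronglyDense3 H (1 / 3) θ) :
    AtMostTwoTightComponents H := by
  have hd := hdense.2
  intro e he f hf g hg
  by_contra hcon
  push_neg at hcon
  obtain ⟨hef, heg, hfg⟩ := hcon
  have hSe := SP_card h3 hd he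
  have hSf := SP_card h3 hd hf
  have hSg := SP_card h3 hd hg
  rcases (SP H e ∩ SP H f).eq_empty_or_nonempty with h1 | ⟨u, hu⟩
  · rcases (SP H e ∩ SP H g).eq_empty_or_nonempty with h2 | ⟨u, hu⟩
    · rcases (SP H f ∩ SP H g).eq_empty_or_nonempty with h3' | ⟨u, hu⟩
      · have d1 : Disjoint (SP H e) (SP H f) := disjoint_iff_inter_eq_empty.mpr h1
        have d2 : Disjoint (SP H e) (SP H g) := disjoint_iff_inter_eq_empty.mpr h2
        have d3 : Disjoint (SP H f) (SP H g) := disjoint_iff_inter_eq_empty.mpr h3'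
        have hcount := card4sum d1 d2 d3 (disjoint_empty_right _)
          (disjoint_empty_right _) (disjoint_empty_right _)
        rw [card_empty] at hcount
        omega
      · obtain ⟨huf, hug⟩ := mem_inter.mp hu
        exact stepB h3 hd he hfg (fun h => hef (stc_symm h)) (fun h => heg (stc_symm h))
          (mem_SP.mp huf) (mem_SP.mp hug)
    · obtain ⟨hue, hug⟩ := mem_inter.mp hu
      exact stepB h3 hd hf heg hef (fun h => hfg (stc_symm h))
        (mem_SP.mp hue) (mem_SP.mp hug)
  · obtain ⟨hue, huf⟩ := mem_inter.mp hu
    exact stepB h3 hd hg hef heg hfg (mem_SP.mp hue) (mem_SP.mp huf)
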